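/- For k ≥ 3 and a factor u of the Thue–Morse word of length 2^k − 1 ≤ |u| ≤ 3·2^{k-1}: the set Cut_k(u) of cutting sets of order k of u has more than one element if and only if u is a factor of φ^{k-1}(010) or of φ^{k-1}(101); and in that case Cut_k(u) = {C1, C2} with |min C1 − min C2| = 2^{k-1}. -/

import Mathlib

/-- Number of occurrences of the second word as a (scattered) subword of the first. -/
def binom {α : Type*} [DecidableEq α] : List α → List α → ℕ
  | _, [] => 1
  | [], _ :: _ => 0
  | a :: u, b :: v => binom u (b :: v) + if a = b then binom u v else 0

/-- k-binomial equivalence. -/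
def BinEq (k : ℕ) (u v : List Bool) : Prop :=
  ∀ x : List Bool, x.length ≤ k → binom u x = binom v x

/-- The Thue–Morse word: `tm n` is the parity of the number of ones
in the binary expansion of `n` (`false` plays the role of the letter 0). -/
def tm (n : ℕ) : Bool := (Nat.digits 2 n).count 1 % 2 == 1

/-- `u` occurs as a (contiguous) factor of the Thue–Morse word. -/
def isFactorTM (u : List Bool) : Prop :=
  ∃ i : ℕ, u = (List.range u.length).map (fun j => tm (i + j))

/-- The Thue–Morse morphism φ(0)=01, φ(1)=10, extended to words. -/
def phiW (w : List Bool) : List Bool :=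
  w.flatMap (fun a => if a then [true, false] else [false, true])

/-- The set of cutting sets of order `k` of a factor `u` of the Thue–Morse word:
for every occurrence `t_[i, i+|u|)` of `u`, the relative positions in `[i, i+|u|]`
of the nonnegative multiples of `2^k`. -/
def CutTM (k : ℕ) (u : List Bool) : Set (Set ℕ) :=
  { S | ∃ i : ℕ, u = (List.range u.length).map (fun j => tm (i + j)) ∧
      S = Set.image (fun m => m - i) {m | i ≤ m ∧ m ≤ i + u.length ∧ 2 ^ k ∣ m} }

section Aux

def occ (u : List Bool) (i : ℕ) : Prop := ∀ j, j < u.length → u.getD j false = tm (i + j)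

lemma tm_two_mul (n : ℕ) : tm (2*n) = tm n := by
  rcases Nat.eq_zero_or_pos n with h | h
  · simp [h]
  · unfold tm
    rw [Nat.digits_def' (by norm_num) (by omega)]
    simp [Nat.mul_div_cancel_left _ (by norm_num : 0 < 2), Nat.mul_mod_right]

lemma tm_two_mul_add_one (n : ℕ) : tm (2*n+1) = !tm n := by
  unfold tm
  rw [Nat.digits_def' (by norm_num) (by omega)]
  have h1 : (2*n+1) % 2 = 1 := by omega
  have h2 : (2*n+1) / 2 = n := by omega
  rw [h1, h2, List.count_cons]
  set c := (Nat.digits 2 n).count 1 with hc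
  have : c % 2 = 0 ∨ c % 2 = 1 := by omega
  rcases this with h | h <;> simp [Nat.add_mod, h]

lemma pair_odd {i : ℕ} (h : tm i = tm (i+1)) : i % 2 = 1 := by
  rcases Nat.even_or_odd i with ⟨m, hm⟩ | ⟨m, hm⟩
  · exfalso
    have hm' : i = 2*m := by omega
    rw [hm', tm_two_mul, show 2*m+1 = 2*m+1 from rfl, tm_two_mul_add_one] at h
    simp at h
  · omega

lemma no_three {i : ℕ} (h1 : tm i = tm (i+1)) (h2 : tm (i+1) = tm (i+2)) : False := by
  have o1 := pair_odd h1
  have o2 := pair_odd h2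
  omega

lemma occ_pair_odd {u : List Bool} {i j : ℕ} (h : occ u i) (hj : j + 1 < u.length)
    (he : u.getD j false = u.getD (j+1) false) : (i + j) % 2 = 1 := by
  apply pair_odd
  calc tm (i+j) = u.getD j false := (h j (by omega)).symm
    _ = u.getD (j+1) false := he
    _ = tm (i + (j+1)) := h (j+1) hj

lemma occ_parity {u : List Bool} {i i' : ℕ} (hn : 4 ≤ u.length)
    (h : occ u i) (h' : occ u i') : i % 2 = i' % 2 := by
  by_cases hex : ∃ j, j + 1 < u.length ∧ u.getD j false = u.getD (j+1) false
  · obtain ⟨j, hj, he⟩ := hex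
    have := occ_pair_odd h hj he
    have := occ_pair_odd h' hj he
    omega
  · push_neg at hex
    have key : ∀ p, occ u p → p % 2 = 0 := by
      intro p hp
      by_contra hpo
      obtain ⟨m, hm⟩ : ∃ m, p = 2*m+1 := ⟨p/2, by omega⟩
      have alt : ∀ j, j + 1 < u.length → u.getD (j+1) false = !(u.getD j false) := by
        intro j hj
        have hne := hex j hj
        cases hja : u.getD j false <;> cases hjb : u.getD (j+1) false <;>
          rw [hja, hjb] at hne <;> simp_all
      have h0 : u.getD 0 false = tm p := hp 0 (by omega)
      have h1 : u.getD 1 false = tm (p+1) := hp 1 (by omega)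
      have h3 : u.getD 3 false = tm (p+3) := hp 3 (by omega)
      have a1 : u.getD 1 false = !(u.getD 0 false) := alt 0 (by omega)
      have a2 : u.getD 2 false = !(u.getD 1 false) := alt 1 (by omega)
      have a3 : u.getD 3 false = !(u.getD 2 false) := alt 2 (by omega)
      have hP : u.getD 0 false = !tm m := by rw [h0, hm]; exact tm_two_mul_add_one m
      have tm0 : tm m = !(u.getD 0 false) := by rw [hP]; simp
      have tm1 : tm (m+1) = !(u.getD 0 false) := by
        rw [← a1, h1, show p + 1 = 2*(m+1) by omega, tm_two_mul]
      have tm2 : tm (m+2) = !(u.getD 0 false) := by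
        have e3 : u.getD 3 false = !(u.getD 0 false) := by rw [a3, a2, a1]; simp
        rw [← e3, h3, show p + 3 = 2*(m+2) by omega, tm_two_mul]
      exact no_three (by rw [tm0, tm1]) (by rw [tm1, tm2])
    rw [key i h, key i' h']

lemma phiW_cons (a : Bool) (w : List Bool) :
    phiW (a :: w) = a :: ((!a) :: phiW w) := by
  cases a <;> simp [phiW]

lemma phiW_length (w : List Bool) : (phiW w).length = 2 * w.length := by
  induction w with
  | nil => simp [phiW]
  | cons a w ih => rw [phiW_cons]; simp [ih]; omega

lemma phiW_getD (w : List Bool) (j : ℕ) (hj : j < w.length) :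
    (phiW w).getD (2*j) false = w.getD j false ∧
    (phiW w).getD (2*j+1) false = !(w.getD j false) := by
  induction w generalizing j with
  | nil => simp at hj
  | cons a w ih =>
    rw [phiW_cons]
    cases j with
    | zero => simp
    | succ j =>
      have e1 : 2*(j+1) = (2*j+1) + 1 := by ring
      have := ih j (by simpa using hj)
      simpa [e1] using this

lemma occ_phiW {w : List Bool} {m : ℕ} (h : occ w m) : occ (phiW w) (2*m) := by
  intro l hl
  rw [phiW_length] at hl
  rcases Nat.even_or_odd l with ⟨j, hj⟩ | ⟨j, hj⟩
  · have hj' : l = 2*j := by omega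
    have hjw : j < w.length := by omega
    rw [hj', (phiW_getD w j hjw).1, h j hjw, show 2*m + 2*j = 2*(m+j) by ring, tm_two_mul]
  · have hj' : l = 2*j+1 := by omega
    have hjw : j < w.length := by omega
    rw [hj', (phiW_getD w j hjw).2, h j hjw, show 2*m + (2*j+1) = 2*(m+j)+1 by ring,
      tm_two_mul_add_one]

lemma phiW_append (s t : List Bool) : phiW (s ++ t) = phiW s ++ phiW t := by
  simp [phiW]

lemma phiW_infix {u w : List Bool} (h : u <:+: w) : phiW u <:+: phiW w := by
  obtain ⟨s, t, rfl⟩ := h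
  exact ⟨phiW s, phiW t, by rw [← phiW_append, ← phiW_append]⟩

lemma occ_infix {u w : List Bool} {p i : ℕ} (hw : occ w p) (hu : occ u i)
    (hpi : p ≤ i) (hiw : i + u.length ≤ p + w.length) : u <:+: w := by
  set d := i - p with hd
  have hu' : u = (w.drop d).take u.length := by
    apply List.ext_getElem
    · rw [List.length_take, List.length_drop]; omega
    · intro j hj1 hj2
      have hjlen : j < u.length := hj1
      have hdw : d + j < w.length := by omega
      rw [List.getElem_take, List.getElem_drop]
      have e1 : u.getD j false = u[j] := List.getD_eq_getElem u false hj1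
      have e2 : w.getD (d+j) false = w[d+j] := List.getD_eq_getElem w false hdw
      rw [← e1, ← e2, hu j hjlen, hw (d+j) hdw, show p + (d + j) = i + j by omega]
  rw [hu']
  exact ((w.drop d).take_prefix u.length).isInfix.trans (w.drop_suffix d).isInfix

lemma infix_occ {u w : List Bool} {p : ℕ} (h : u <:+: w) (hw : occ w p) :
    ∃ d, d + u.length ≤ w.length ∧ occ u (p + d) := by
  obtain ⟨s, t, rfl⟩ := h
  refine ⟨s.length, by simp only [List.length_append]; omega, ?_⟩
  intro j hj
  have hlt : s.length + j < (s ++ u ++ t).length := by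
    simp only [List.length_append]; omega
  have key := hw (s.length + j) hlt
  rw [show p + (s.length + j) = p + s.length + j by omega] at key
  rw [← key, List.getD_eq_getElem u false hj, List.getD_eq_getElem _ false hlt]
  rw [List.getElem_append_left (by simp only [List.length_append]; omega),
    List.getElem_append_right (by omega)]
  congr 1
  omega

lemma main_base (u : List Bool) (hn : 1 ≤ u.length) :
    (∀ i i', occ u i → occ u i' → i % 2^1 = i' % 2^1) ∨
    ((u <:+: phiW^[0] [false,true,false] ∨ u <:+: phiW^[0] [true,false,true]) ∧
     ∃ i i', occ u i ∧ occ u i' ∧ i' % 2^1 = (i + 2^0) % 2^1 ∧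
     ∀ i'', occ u i'' → i'' % 2^1 = i % 2^1 ∨ i'' % 2^1 = i' % 2^1) := by
  by_cases hall : ∀ i i', occ u i → occ u i' → i % 2^1 = i' % 2^1
  · exact Or.inl hall
  · right
    push_neg at hall
    obtain ⟨i1, i2, h1, h2, hne⟩ := hall
    simp only [pow_one, pow_zero] at hne ⊢
    have hlen : u.length ≤ 3 := by
      by_contra hc
      exact hne (occ_parity (by omega) h1 h2)
    have hadj : ∀ j, j + 1 < u.length → u.getD j false ≠ u.getD (j+1) false := by
      intro j hj he
      have o1 := occ_pair_odd h1 hj he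
      have o2 := occ_pair_odd h2 hj he
      omega
    refine ⟨?_, i1, i2, h1, h2, by omega, fun i'' _ => by omega⟩
    simp only [Function.iterate_zero, id_eq]
    match u, hn, hlen with
    | [a], _, _ =>
      cases a <;> decide
    | [a, b], _, _ =>
      have hb : b ≠ a := fun h => hadj 0 (by simp) (by simp [h])
      cases a <;> cases b <;> simp_all <;> decide
    | [a, b, c], _, _ =>
      have hb : b ≠ a := fun h => hadj 0 (by simp) (by simp [h])
      have hc : c ≠ b := fun h => hadj 1 (by simp) (by simp [h])
      cases a <;> cases b <;> cases c <;> simp_all <;> decide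

lemma getD_map_range (f : ℕ → Bool) (L j : ℕ) (hj : j < L) :
    (((List.range L).map f).getD j false) = f j := by
  rw [List.getD_eq_getElem _ false (by simpa using hj)]
  simp

lemma dbl_mod {x y M : ℕ} (h : x % M = y % M) :
    (2*x) % (2*M) = (2*y) % (2*M) := Nat.ModEq.mul_left' (c := 2) h

lemma dbl_mod1 {x y M : ℕ} (h : x % M = y % M) :
    (2*x+1) % (2*M) = (2*y+1) % (2*M) := Nat.ModEq.add_right 1 (dbl_mod h)

lemma main_step (k : ℕ) (hk : 1 ≤ k)
    (IH : ∀ u : List Bool, 2^k - 1 ≤ u.length → (k = 1 ∨ 4 ≤ u.length) →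
      (∀ i i', occ u i → occ u i' → i % 2^k = i' % 2^k) ∨
      ((u <:+: phiW^[k-1] [false,true,false] ∨ u <:+: phiW^[k-1] [true,false,true]) ∧
       ∃ i i', occ u i ∧ occ u i' ∧ i' % 2^k = (i + 2^(k-1)) % 2^k ∧
       ∀ i'', occ u i'' → i'' % 2^k = i % 2^k ∨ i'' % 2^k = i' % 2^k))
    (u : List Bool) (hn : 2^(k+1) - 1 ≤ u.length) (hn4 : 4 ≤ u.length) :
    (∀ i i', occ u i → occ u i' → i % 2^(k+1) = i' % 2^(k+1)) ∨
    ((u <:+: phiW^[k] [false,true,false] ∨ u <:+: phiW^[k] [true,false,true]) ∧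
     ∃ i i', occ u i ∧ occ u i' ∧ i' % 2^(k+1) = (i + 2^k) % 2^(k+1) ∧
     ∀ i'', occ u i'' → i'' % 2^(k+1) = i % 2^(k+1) ∨ i'' % 2^(k+1) = i' % 2^(k+1)) := by
  by_cases hall : ∀ i i', occ u i → occ u i' → i % 2^(k+1) = i' % 2^(k+1)
  · exact Or.inl hall
  right
  push_neg at hall
  obtain ⟨i1, i2, h1, h2, hne12⟩ := hall
  set n := u.length with hnu
  have hpow : (2:ℕ)^(k+1) = 2 * 2^k := by ring
  have hpow2 : (2:ℕ)^k = 2 * 2^(k-1) := by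
    rw [← pow_succ']
    congr 1
    omega
  have hparity := occ_parity hn4 h1 h2
  have hIHlen : (2:ℕ)^k - 1 ≤ (n+1)/2 := by
    have : (2:ℕ)^(k+1) = 2*2^k := by ring
    omega
  have hIH4 : ∀ L : ℕ, 2^k ≤ L → (k = 1 ∨ 4 ≤ L) := by
    intro L hL
    rcases Nat.eq_or_lt_of_le hk with h | h
    · exact Or.inl h.symm
    · right
      have : (2:ℕ)^2 ≤ 2^k := Nat.pow_le_pow_right (by norm_num) (by omega)
      omega
  rcases Nat.even_or_odd i1 with ⟨m1, hm1⟩ | ⟨m1, hm1⟩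
  -- EVEN CASE
  · have hm1' : i1 = 2*m1 := by omega
    set L := (n+1)/2 with hL
    set v : List Bool := (List.range L).map (fun j => u.getD (2*j) false) with hv
    have hvlen : v.length = L := by simp [hv]
    have hvget : ∀ j, j < L → v.getD j false = u.getD (2*j) false := by
      intro j hj; rw [hv]; exact getD_map_range _ L j hj
    -- forward
    have fwd : ∀ m, occ u (2*m) → occ v m := by
      intro m hm j hj
      rw [hvlen] at hj
      have h2j : 2*j < n := by omega
      rw [hvget j hj, hm (2*j) h2j, show 2*m + 2*j = 2*(m+j) by ring, tm_two_mul]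
    -- pairing
    have pairing : ∀ j, 2*j+1 < n → u.getD (2*j+1) false = !(u.getD (2*j) false) := by
      intro j hj
      rw [h1 (2*j+1) hj, h1 (2*j) (by omega), hm1',
        show 2*m1 + (2*j+1) = 2*(m1+j)+1 by ring, show 2*m1 + 2*j = 2*(m1+j) by ring,
        tm_two_mul, tm_two_mul_add_one]
    -- backward
    have bwd : ∀ m, occ v m → occ u (2*m) := by
      intro m hm l hl
      rcases Nat.even_or_odd l with ⟨j, hj⟩ | ⟨j, hj⟩
      · have hj' : l = 2*j := by omega
        have hjL : j < L := by omega
        rw [hj', ← hvget j hjL, hm j (by omega), show 2*m + 2*j = 2*(m+j) by ring, tm_two_mul]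
      · have hj' : l = 2*j+1 := by omega
        have hjL : j < L := by omega
        rw [hj', pairing j (by omega), ← hvget j hjL, hm j (by omega),
          show 2*m + (2*j+1) = 2*(m+j)+1 by ring, tm_two_mul_add_one]
    have hvm1 : occ v m1 := fwd m1 (by rw [← hm1']; exact h1)
    have hufix : u <:+: phiW v := by
      refine occ_infix (occ_phiW hvm1) (by rw [← hm1']; exact h1) (le_refl _) ?_
      rw [phiW_length, hvlen]
      omega
    -- apply IH to v
    rcases IH v (by rw [hvlen]; exact hIHlen) (by rw [hvlen]; exact hIH4 L (by omega)) with hall' | ⟨hspec, a, a', ha, ha', hgap, hclass⟩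
    · exfalso
      apply hne12
      have hm2' : i2 = 2*(i2/2) := by omega
      have := hall' m1 (i2/2) hvm1 (fwd (i2/2) (by rw [← hm2']; exact h2))
      rw [hm1', hm2', hpow]
      exact dbl_mod this
    · constructor
      · have hiter : ∀ X : List Bool, phiW^[k] X = phiW (phiW^[k-1] X) := by
          intro X
          conv_lhs => rw [show k = (k-1)+1 by omega]
          rw [Function.iterate_succ_apply']
        rcases hspec with h | h
        · left
          rw [hiter]
          exact hufix.trans (phiW_infix h)
        · right
          rw [hiter]
          exact hufix.trans (phiW_infix h)
      · refine ⟨2*a, 2*a', bwd a ha, bwd a' ha', ?_, ?_⟩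
        · rw [hpow, show 2*a + 2^k = 2*(a + 2^(k-1)) by rw [hpow2]; ring]
          exact dbl_mod hgap
        · intro i'' hi''
          have hpar : i'' % 2 = 0 := by
            have := occ_parity hn4 hi'' h1
            omega
          have hm'' : i'' = 2*(i''/2) := by omega
          have := hclass (i''/2) (fwd (i''/2) (by rw [← hm'']; exact hi''))
          rw [hm'', hpow]
          rcases this with h | h
          · exact Or.inl (dbl_mod h)
          · exact Or.inr (dbl_mod h)
  -- ODD CASE
  · have hm1' : i1 = 2*m1+1 := by omega
    set L := n/2 + 1 with hL
    set v : List Bool := (List.range L).map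
      (fun j => if j = 0 then !(u.getD 0 false) else u.getD (2*j-1) false) with hv
    have hvlen : v.length = L := by simp [hv]
    have hvget0 : v.getD 0 false = !(u.getD 0 false) := by
      rw [hv, getD_map_range _ L 0 (by omega)]
      simp
    have hvget : ∀ j, 1 ≤ j → j < L → v.getD j false = u.getD (2*j-1) false := by
      intro j hj1 hj
      have hj0 : j ≠ 0 := by omega
      rw [hv, getD_map_range _ L j hj]
      simp [hj0]
    -- forward
    have fwd : ∀ m, occ u (2*m+1) → occ v m := by
      intro m hm j hj
      rw [hvlen] at hj
      rcases Nat.eq_zero_or_pos j with rfl | hj1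
      · rw [hvget0, hm 0 (by omega)]
        simp only [Nat.add_zero]
        rw [tm_two_mul_add_one]
        simp
      · have h2j : 2*j-1 < n := by omega
        rw [hvget j hj1 hj, hm (2*j-1) h2j,
          show 2*m+1 + (2*j-1) = 2*(m+j) by omega, tm_two_mul]
    -- backward
    have hvm1 : occ v m1 := fwd m1 (by rw [← hm1']; exact h1)
    have bwd : ∀ m, occ v m → occ u (2*m+1) := by
      intro m hm l hl
      rcases Nat.even_or_odd l with ⟨j, hj⟩ | ⟨j, hj⟩
      · have hj' : l = 2*j := by omega
        have hjL : j < L := by omega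
        have key : u.getD (2*j) false = !(v.getD j false) := by
          rw [h1 (2*j) (by omega), hm1', show 2*m1+1 + 2*j = 2*(m1+j)+1 by ring,
            tm_two_mul_add_one, hvm1 j (by rw [hvlen]; omega)]
        rw [hj', key, hm j (by rw [hvlen]; omega),
          show 2*m+1 + 2*j = 2*(m+j)+1 by ring, tm_two_mul_add_one]
      · have hj' : l = 2*j+1 := by omega
        have hjL : j + 1 < L := by omega
        have hidx : 2*(j+1)-1 = 2*j+1 := by omega
        have key : u.getD (2*j+1) false = v.getD (j+1) false := by
          rw [hvget (j+1) (by omega) hjL, hidx]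
        rw [hj', key, hm (j+1) (by rw [hvlen]; omega),
          show 2*m+1 + (2*j+1) = 2*(m+(j+1)) by ring, tm_two_mul]
    have hufix : u <:+: phiW v := by
      refine occ_infix (occ_phiW hvm1) h1 (by omega) ?_
      rw [phiW_length, hvlen]
      omega
    rcases IH v (by rw [hvlen]; omega) (by rw [hvlen]; exact hIH4 L (by omega)) with hall' | ⟨hspec, a, a', ha, ha', hgap, hclass⟩
    · exfalso
      apply hne12
      have hm2' : i2 = 2*(i2/2)+1 := by omega
      have := hall' m1 (i2/2) hvm1 (fwd (i2/2) (by rw [← hm2']; exact h2))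
      rw [hm1', hm2', hpow]
      exact dbl_mod1 this
    · constructor
      · have hiter : ∀ X : List Bool, phiW^[k] X = phiW (phiW^[k-1] X) := by
          intro X
          conv_lhs => rw [show k = (k-1)+1 by omega]
          rw [Function.iterate_succ_apply']
        rcases hspec with h | h
        · left
          rw [hiter]
          exact hufix.trans (phiW_infix h)
        · right
          rw [hiter]
          exact hufix.trans (phiW_infix h)
      · refine ⟨2*a+1, 2*a'+1, bwd a ha, bwd a' ha', ?_, ?_⟩
        · rw [hpow, show 2*a+1 + 2^k = 2*(a + 2^(k-1))+1 by rw [hpow2]; ring]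
          exact dbl_mod1 hgap
        · intro i'' hi''
          have hpar : i'' % 2 = 1 := by
            have := occ_parity hn4 hi'' h1
            omega
          have hm'' : i'' = 2*(i''/2)+1 := by omega
          have := hclass (i''/2) (fwd (i''/2) (by rw [← hm'']; exact hi''))
          rw [hm'', hpow]
          rcases this with h | h
          · exact Or.inl (dbl_mod1 h)
          · exact Or.inr (dbl_mod1 h)

lemma infix_occ' {u w : List Bool} (h : u <:+: w) :
    ∃ d, d + u.length ≤ w.length ∧ ∀ p, occ w p → occ u (p + d) := by
  obtain ⟨s, t, rfl⟩ := h
  refine ⟨s.length, by simp only [List.length_append]; omega, ?_⟩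
  intro p hw j hj
  have hlt : s.length + j < (s ++ u ++ t).length := by
    simp only [List.length_append]; omega
  have key := hw (s.length + j) hlt
  rw [show p + (s.length + j) = p + s.length + j by omega] at key
  rw [← key, List.getD_eq_getElem u false hj, List.getD_eq_getElem _ false hlt]
  rw [List.getElem_append_left (by simp only [List.length_append]; omega),
    List.getElem_append_right (by omega)]
  congr 1
  omega

lemma occ_iter_phiW {w : List Bool} {m : ℕ} (h : occ w m) (j : ℕ) :
    occ (phiW^[j] w) (2^j * m) := by
  induction j with
  | zero => simpa using h
  | succ j ih =>
    rw [Function.iterate_succ_apply']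
    have := occ_phiW ih
    rwa [show 2*(2^j*m) = 2^(j+1)*m by ring] at this

lemma occ010 : occ [false, true, false] 3 := by
  intro j hj
  simp only [List.length_cons, List.length_nil] at hj
  interval_cases j <;> simp only [tm] <;> norm_num [List.count_cons]

lemma occ010' : occ [false, true, false] 18 := by
  intro j hj
  simp only [List.length_cons, List.length_nil] at hj
  interval_cases j <;> simp only [tm] <;> norm_num [List.count_cons]

lemma occ101 : occ [true, false, true] 11 := by
  intro j hj
  simp only [List.length_cons, List.length_nil] at hj
  interval_cases j <;> simp only [tm] <;> norm_num [List.count_cons]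

lemma occ101' : occ [true, false, true] 14 := by
  intro j hj
  simp only [List.length_cons, List.length_nil] at hj
  interval_cases j <;> simp only [tm] <;> norm_num [List.count_cons]

lemma special_two {k : ℕ} (hk : 1 ≤ k) {u : List Bool}
    (h : u <:+: phiW^[k-1] [false,true,false] ∨ u <:+: phiW^[k-1] [true,false,true]) :
    ∃ i i', occ u i ∧ occ u i' ∧ i % 2^k ≠ i' % 2^k := by
  have hkk : k = (k-1) + 1 := by omega
  have hpow : (2:ℕ)^k = 2 * 2^(k-1) := by conv_lhs => rw [hkk, pow_succ, mul_comm]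
  have hdvd : ∀ c : ℕ, ¬ (2 * 2^(k-1) ∣ 15 * 2^(k-1)) ∧ ¬ (2 * 2^(k-1) ∣ 3 * 2^(k-1)) := by
    intro c
    constructor <;> intro hd <;>
    · rw [mul_comm 2 (2^(k-1)), mul_comm _ (2^(k-1))] at hd
      have := (mul_dvd_mul_iff_left (a := (2:ℕ)^(k-1)) (by positivity)).mp hd
      norm_num at this
  rcases h with h | h
  · obtain ⟨d, hd, hocc⟩ := infix_occ' h
    refine ⟨2^(k-1)*3 + d, 2^(k-1)*18 + d, hocc _ (occ_iter_phiW occ010 (k-1)),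
      hocc _ (occ_iter_phiW occ010' (k-1)), ?_⟩
    intro heq
    have hle : 2^(k-1)*3 + d ≤ 2^(k-1)*18 + d := by nlinarith [(Nat.pow_pos (show 0 < 2 by norm_num) : 0 < 2^(k-1))]
    have := (Nat.modEq_iff_dvd' hle).mp heq
    rw [hpow] at this
    rw [show 2^(k-1)*18 + d - (2^(k-1)*3 + d) = 15 * 2^(k-1) by ring_nf; omega] at this
    exact (hdvd 0).1 this
  · obtain ⟨d, hd, hocc⟩ := infix_occ' h
    refine ⟨2^(k-1)*11 + d, 2^(k-1)*14 + d, hocc _ (occ_iter_phiW occ101 (k-1)),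
      hocc _ (occ_iter_phiW occ101' (k-1)), ?_⟩
    intro heq
    have hle : 2^(k-1)*11 + d ≤ 2^(k-1)*14 + d := by nlinarith [(Nat.pow_pos (show 0 < 2 by norm_num) : 0 < 2^(k-1))]
    have := (Nat.modEq_iff_dvd' hle).mp heq
    rw [hpow] at this
    rw [show 2^(k-1)*14 + d - (2^(k-1)*11 + d) = 3 * 2^(k-1) by ring_nf; omega] at this
    exact (hdvd 0).2 this

lemma cut_eq (P n i : ℕ) (hP : 0 < P) :
    Set.image (fun m => m - i) {m | i ≤ m ∧ m ≤ i + n ∧ P ∣ m} =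
      {x | x ≤ n ∧ (x + i) % P = 0} := by
  ext x
  constructor
  · rintro ⟨m, ⟨hm1, hm2, hm3⟩, rfl⟩
    refine ⟨by show m - i ≤ n; omega, ?_⟩
    show (m - i + i) % P = 0
    rw [show m - i + i = m by omega]
    obtain ⟨c, rfl⟩ := hm3
    exact Nat.mul_mod_right P c
  · rintro ⟨h1, h2⟩
    exact ⟨x + i, ⟨by omega, by omega, (Nat.dvd_of_mod_eq_zero h2)⟩,
      (by omega : x + i - i = x)⟩

lemma Ds_congr {P n i i' : ℕ} (h : i % P = i' % P) :
    {x : ℕ | x ≤ n ∧ (x + i) % P = 0} = {x | x ≤ n ∧ (x + i') % P = 0} := by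
  ext x
  have e : (x + i) % P = (x + i') % P := Nat.ModEq.add_left x h
  simp [e]

lemma r_spec (P i : ℕ) (hP : 0 < P) :
    ((P - i % P) % P + i) % P = 0 ∧ (P - i % P) % P < P := by
  refine ⟨?_, Nat.mod_lt _ hP⟩
  set s := i % P with hs
  have hsP : s < P := Nat.mod_lt _ hP
  rcases Nat.eq_zero_or_pos s with h0 | h0
  · rw [h0, Nat.sub_zero, Nat.mod_self, Nat.zero_add, ← hs]
    exact h0
  · have hlt : (P - s) % P = P - s := Nat.mod_eq_of_lt (by omega : P - s < P)
    rw [hlt, Nat.add_mod, hlt, ← hs, show P - s + s = P by omega, Nat.mod_self]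

lemma r_min (P i x : ℕ) (hP : 0 < P) (hx : (x + i) % P = 0) :
    (P - i % P) % P ≤ x := by
  set s := i % P with hs
  have hsP : s < P := Nat.mod_lt _ hP
  rcases Nat.eq_zero_or_pos s with h0 | h0
  · rw [h0, Nat.sub_zero, Nat.mod_self]
    exact Nat.zero_le x
  · rw [Nat.mod_eq_of_lt (by omega : P - s < P)]
    by_contra hc
    push_neg at hc
    have hxlt : x < P := by omega
    have : (x + i) % P = x + s := by
      rw [Nat.add_mod, ← hs, Nat.mod_eq_of_lt hxlt, Nat.mod_eq_of_lt (by omega : x + s < P)]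
    omega

lemma sInf_D (P n i : ℕ) (hP : 0 < P) (hn : P - 1 ≤ n) :
    sInf {x : ℕ | x ≤ n ∧ (x + i) % P = 0} = (P - i % P) % P := by
  have hmem : (P - i % P) % P ∈ {x : ℕ | x ≤ n ∧ (x + i) % P = 0} :=
    ⟨by have := (r_spec P i hP).2; omega, (r_spec P i hP).1⟩
  refine le_antisymm (Nat.sInf_le hmem) ?_
  have hne : {x : ℕ | x ≤ n ∧ (x + i) % P = 0}.Nonempty := ⟨_, hmem⟩
  have := Nat.sInf_mem hne
  exact r_min P i _ hP this.2

lemma r_inj (P s s' : ℕ) (hs : s < P) (hs' : s' < P)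
    (h : (P - s) % P = (P - s') % P) : s = s' := by
  rcases Nat.eq_zero_or_pos s with h0 | h0 <;> rcases Nat.eq_zero_or_pos s' with h0' | h0'
  · omega
  · rw [h0, Nat.sub_zero, Nat.mod_self, Nat.mod_eq_of_lt (by omega : P - s' < P)] at h
    omega
  · rw [h0', Nat.sub_zero, Nat.mod_self, Nat.mod_eq_of_lt (by omega : P - s < P)] at h
    omega
  · rw [Nat.mod_eq_of_lt (by omega : P - s < P), Nat.mod_eq_of_lt (by omega : P - s' < P)] at h
    omega

lemma diff_lemma (h i i' : ℕ) (hh : 0 < h)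
    (hgap : i' % (2*h) = (i + h) % (2*h)) :
    (2*h - i % (2*h)) % (2*h) - (2*h - i' % (2*h)) % (2*h) = h ∨
    (2*h - i' % (2*h)) % (2*h) - (2*h - i % (2*h)) % (2*h) = h := by
  set P := 2*h with hPd
  have hP : 0 < P := by omega
  set A := (P - i % P) % P with hA
  set B := (P - i' % P) % P with hB
  have eA : (A + i) % P = 0 := (r_spec P i hP).1
  have eB : (B + i') % P = 0 := (r_spec P i' hP).1
  have hAP : A < P := (r_spec P i hP).2
  have hBP : B < P := (r_spec P i' hP).2
  have m1 : (A + i) % P = (B + i') % P := by rw [eA, eB]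
  have m2 : (B + i') % P = (B + (i + h)) % P := Nat.ModEq.add_left B hgap
  have m3 : (A + i) % P = ((B + h) + i) % P := by rw [m1, m2, show B + (i+h) = B + h + i by ring]
  have m4 : A % P = (B + h) % P := Nat.ModEq.add_right_cancel' i m3
  rw [Nat.mod_eq_of_lt hAP] at m4
  rcases Nat.lt_or_ge (B + h) P with hlt | hge
  · rw [Nat.mod_eq_of_lt hlt] at m4
    left; omega
  · have : (B + h) % P = B + h - P := by
      rw [Nat.mod_eq_sub_mod (by omega), Nat.mod_eq_of_lt (by omega)]
    rw [this] at m4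
    right; omega


lemma main_lemma (k : ℕ) (hk : 1 ≤ k) :
    ∀ u : List Bool, 2^k - 1 ≤ u.length → (k = 1 ∨ 4 ≤ u.length) →
    (∀ i i', occ u i → occ u i' → i % 2^k = i' % 2^k) ∨
    ((u <:+: phiW^[k-1] [false,true,false] ∨ u <:+: phiW^[k-1] [true,false,true]) ∧
     ∃ i i', occ u i ∧ occ u i' ∧ i' % 2^k = (i + 2^(k-1)) % 2^k ∧
     ∀ i'', occ u i'' → i'' % 2^k = i % 2^k ∨ i'' % 2^k = i' % 2^k) := by
  induction k, hk using Nat.le_induction with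
  | base =>
    intro u h1 _
    exact main_base u (by simpa using h1)
  | succ k hk IH =>
    intro u h1 h4
    exact main_step k hk IH u h1 (by omega)

lemma occ_iff (u : List Bool) (i : ℕ) :
    u = (List.range u.length).map (fun j => tm (i + j)) ↔ occ u i := by
  constructor
  · intro h j hj
    conv_lhs => rw [h]
    exact getD_map_range _ _ j hj
  · intro h
    apply List.ext_getElem (by simp)
    intro j hj1 hj2
    have hh := h j hj1
    rw [List.getD_eq_getElem u false hj1] at hh
    simp [hh]

end Aux

theorem cut_two_elements (k : ℕ) (hk : 3 ≤ k) (u : List Bool) (hu : isFactorTM u)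
    (h₁ : 2 ^ k - 1 ≤ u.length) (h₂ : u.length ≤ 3 * 2 ^ (k - 1)) :
    ((¬ ∃ C : Set ℕ, CutTM k u = {C}) ↔
      (u <:+: phiW^[k - 1] [false, true, false] ∨
       u <:+: phiW^[k - 1] [true, false, true])) ∧
    ((¬ ∃ C : Set ℕ, CutTM k u = {C}) →
      ∃ C₁ C₂ : Set ℕ, C₁ ≠ C₂ ∧ CutTM k u = {C₁, C₂} ∧
        (sInf C₁ - sInf C₂ = 2 ^ (k - 1) ∨ sInf C₂ - sInf C₁ = 2 ^ (k - 1))) := by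
  have hk1 : 1 ≤ k := by omega
  set P : ℕ := 2^k with hPdef
  have hP : 0 < P := Nat.pow_pos (by norm_num)
  have h8 : 8 ≤ P := by
    have : (2:ℕ)^3 ≤ 2^k := Nat.pow_le_pow_right (by norm_num) hk
    simpa using this
  set n := u.length with hn
  have hn4 : 4 ≤ n := by omega
  have hh : 0 < 2^(k-1) ∧ P = 2 * 2^(k-1) := by
    constructor
    · exact Nat.pow_pos (by norm_num)
    · have e : (2:ℕ) * 2^(k-1) = 2^(k-1+1) := (pow_succ' 2 (k-1)).symm
      rw [hPdef, e, show k-1+1 = k by omega]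
  obtain ⟨i0, hi0⟩ := hu
  rw [occ_iff] at hi0
  have cutDesc : ∀ C, C ∈ CutTM k u ↔
      ∃ i, occ u i ∧ C = {x | x ≤ n ∧ (x + i) % P = 0} := by
    intro C
    simp only [CutTM, Set.mem_setOf_eq]
    constructor
    · rintro ⟨i, hfac, rfl⟩
      exact ⟨i, (occ_iff u i).mp hfac, (cut_eq P n i hP).symm ▸ rfl⟩
    · rintro ⟨i, hocc, rfl⟩
      exact ⟨i, (occ_iff u i).mpr hocc, (cut_eq P n i hP).symm⟩
  have sInfD : ∀ i : ℕ, sInf {x | x ≤ n ∧ (x + i) % P = 0} = (P - i % P) % P := by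
    intro i
    exact sInf_D P n i hP (by omega)
  have hmain := main_lemma k hk1 u h₁ (Or.inr hn4)
  -- if all residues agree, CutTM is a singleton
  have hsingle : (∀ i i', occ u i → occ u i' → i % P = i' % P) →
      ∃ C : Set ℕ, CutTM k u = {C} := by
    intro hall
    refine ⟨{x | x ≤ n ∧ (x + i0) % P = 0}, ?_⟩
    ext C
    rw [Set.mem_singleton_iff, cutDesc]
    constructor
    · rintro ⟨i, hocc, rfl⟩
      exact Ds_congr (hall i i0 hocc hi0)
    · rintro rfl
      exact ⟨i0, hi0, rfl⟩
  -- if CutTM is a singleton, all residues agree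
  have hsingle' : (∃ C : Set ℕ, CutTM k u = {C}) →
      ∀ i i', occ u i → occ u i' → i % P = i' % P := by
    rintro ⟨C, hC⟩ i i' hocc hocc'
    have m1 : {x | x ≤ n ∧ (x + i) % P = 0} ∈ CutTM k u := (cutDesc _).mpr ⟨i, hocc, rfl⟩
    have m2 : {x | x ≤ n ∧ (x + i') % P = 0} ∈ CutTM k u := (cutDesc _).mpr ⟨i', hocc', rfl⟩
    rw [hC, Set.mem_singleton_iff] at m1 m2
    have heq := m1.trans m2.symm
    have := congrArg sInf heq
    rw [sInfD, sInfD] at this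
    exact r_inj P _ _ (Nat.mod_lt _ hP) (Nat.mod_lt _ hP) this
  constructor
  · constructor
    · intro hns
      rcases hmain with hall | ⟨hspec, _⟩
      · exact absurd (hsingle hall) hns
      · exact hspec
    · intro hspec hex
      obtain ⟨i, i', ho, ho', hne⟩ := special_two hk1 hspec
      exact hne (hsingle' hex i i' ho ho')
  · intro hns
    rcases hmain with hall | ⟨hspec, i, i', hoi, hoi', hgap, hclass⟩
    · exact absurd (hsingle hall) hns
    set C₁ : Set ℕ := {x | x ≤ n ∧ (x + i) % P = 0} with hC₁
    set C₂ : Set ℕ := {x | x ≤ n ∧ (x + i') % P = 0} with hC₂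
    have hdiff : sInf C₁ - sInf C₂ = 2^(k-1) ∨ sInf C₂ - sInf C₁ = 2^(k-1) := by
      rw [hC₁, hC₂, sInfD, sInfD]
      have := diff_lemma (2^(k-1)) i i' hh.1 (by rw [← hh.2]; exact hgap)
      rw [← hh.2] at this
      tauto
    have hCne : C₁ ≠ C₂ := by
      intro h
      rw [h] at hdiff
      simp at hdiff
      have := hh.1
      omega
    refine ⟨C₁, C₂, hCne, ?_, hdiff⟩
    ext C
    rw [cutDesc]
    constructor
    · rintro ⟨i'', hocc, rfl⟩
      rcases hclass i'' hocc with h | h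
      · exact Or.inl (Ds_congr h)
      · exact Or.inr (Ds_congr h)
    · rintro (rfl | rfl)
      · exact ⟨i, hoi, rfl⟩
      · exact ⟨i', hoi', rfl⟩
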